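/- Let G be a connected graph with minimum degree at least d and let v be a vertex with B_2(v) ≠ V(G). Then the degree of v in G^4 is at least 2d. -/

import Mathlib

/-- The `k`-th power of a simple graph `G`: two distinct vertices are adjacent
iff their distance in `G` is at most `k`. -/
def SimpleGraph.power {V : Type*} (G : SimpleGraph V) (k : ℕ) : SimpleGraph V where
  Adj u v := u ≠ v ∧ G.dist u v ≤ k
  symm := ⟨fun u v h => ⟨h.1.symm, by rw [SimpleGraph.dist_comm]; exact h.2⟩⟩
  loopless := ⟨fun v h => h.1 rfl⟩

lemma exists_adj_dist_pred {V : Type*} (G : SimpleGraph V) (hconn : G.Connected)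
    {u v : V} {n : ℕ} (h : G.dist u v = n + 1) :
    ∃ w, G.Adj u w ∧ G.dist w v = n := by
  obtain ⟨p, hp⟩ := (hconn u v).exists_walk_length_eq_dist
  rw [h] at hp
  cases p with
  | nil => simp at hp
  | cons hadj q =>
    rename_i w
    refine ⟨w, hadj, le_antisymm ?_ ?_⟩
    · have := SimpleGraph.dist_le q
      simpa [hp, Nat.succ_inj] using this.trans_eq (by simpa using hp)
    · have h1 : G.dist u w ≤ 1 := by
        have := SimpleGraph.dist_le (SimpleGraph.Walk.cons hadj SimpleGraph.Walk.nil)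
        simpa using this
      have htri := hconn.dist_triangle (u := u) (v := w) (w := v)
      omega

lemma exists_dist_eq_three {V : Type*} (G : SimpleGraph V) (hconn : G.Connected)
    {v : V} {u : V} (h : 3 ≤ G.dist u v) : ∃ w, G.dist w v = 3 := by
  obtain ⟨n, hn⟩ : ∃ n, G.dist u v = n := ⟨_, rfl⟩
  induction n generalizing u with
  | zero => omega
  | succ n ih =>
    rcases Nat.lt_or_ge n 3 with hlt | hge
    · interval_cases n
      · omega
      · omega
      · exact ⟨u, by omega⟩
    · obtain ⟨w, _, hw⟩ := exists_adj_dist_pred G hconn hn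
      exact ih (by omega) hw

theorem degree_fourth_power_ge_two_d {V : Type*} [Fintype V] (G : SimpleGraph V) (d : ℕ)
    (hconn : G.Connected) (hmin : ∀ v : V, d ≤ (G.neighborSet v).ncard)
    (v : V) (hv : {u : V | G.dist u v ≤ 2} ≠ Set.univ) :
    2 * d ≤ ((G.power 4).neighborSet v).ncard := by
  obtain ⟨u, hu⟩ : ∃ u, ¬ G.dist u v ≤ 2 := by
    by_contra h
    push_neg at h
    exact hv (Set.eq_univ_iff_forall.2 fun u => h u)
  obtain ⟨w, hw⟩ := exists_dist_eq_three G hconn (v := v) (u := u) (by omega)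
  have hsub : G.neighborSet v ∪ G.neighborSet w ⊆ (G.power 4).neighborSet v := by
    rintro x (hx | hx)
    · simp only [SimpleGraph.mem_neighborSet] at hx ⊢
      refine ⟨hx.ne, ?_⟩
      rw [SimpleGraph.dist_eq_one_iff_adj.2 hx]
      omega
    · simp only [SimpleGraph.mem_neighborSet] at hx ⊢
      have hd1 : G.dist w x = 1 := SimpleGraph.dist_eq_one_iff_adj.2 hx
      have htri := hconn.dist_triangle (u := v) (v := w) (w := x)
      have hvw : G.dist v w = 3 := by rwa [SimpleGraph.dist_comm]
      constructor
      · rintro rfl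
        rw [hw] at hd1; omega
      · omega
  have hdisj : Disjoint (G.neighborSet v) (G.neighborSet w) := by
    rw [Set.disjoint_left]
    intro x hx hx'
    simp only [SimpleGraph.mem_neighborSet] at hx hx'
    have h1 : G.dist w x = 1 := SimpleGraph.dist_eq_one_iff_adj.2 hx'
    have h2 : G.dist x v = 1 := SimpleGraph.dist_eq_one_iff_adj.2 hx.symm
    have htri := hconn.dist_triangle (u := w) (v := x) (w := v)
    omega
  have hcard : (G.neighborSet v).ncard + (G.neighborSet w).ncard
      = (G.neighborSet v ∪ G.neighborSet w).ncard := by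
    rw [Set.ncard_union_eq hdisj (Set.toFinite _) (Set.toFinite _)]
  have hle := Set.ncard_le_ncard hsub (Set.toFinite _)
  have := hmin v
  have := hmin w
  omega
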